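/- Every noncyclic subgroup of ℤ[1/p] (p a prime) is of finite index in ℤ[1/p]. -/

import Mathlib

/-- The subgroup ℤ[1/p] of ℚ. -/
def zOneOver (p : ℕ) : AddSubgroup ℚ :=
  AddSubgroup.closure {x : ℚ | ∃ n : ℕ, x = 1 / (p : ℚ) ^ n}

lemma one_div_pow_mem (p : ℕ) (n : ℕ) : (1 / (p:ℚ)^n) ∈ zOneOver p :=
  AddSubgroup.subset_closure ⟨n, rfl⟩

lemma int_div_pow_mem (p : ℕ) (a : ℤ) (n : ℕ) : ((a:ℚ) / (p:ℚ)^n) ∈ zOneOver p := by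
  have h : (a:ℚ)/(p:ℚ)^n = a • (1/(p:ℚ)^n) := by rw [zsmul_eq_mul]; ring
  rw [h]
  exact AddSubgroup.zsmul_mem _ (one_div_pow_mem p n) a

lemma mem_zOneOver {p : ℕ} (hp : p.Prime) {x : ℚ} (hx : x ∈ zOneOver p) :
    ∃ (a : ℤ) (n : ℕ), x = (a:ℚ) / (p:ℚ)^n := by
  have hp0 : (p:ℚ) ≠ 0 := by exact_mod_cast hp.ne_zero
  induction hx using AddSubgroup.closure_induction with
  | mem x hx => obtain ⟨n, rfl⟩ := hx; exact ⟨1, n, by push_cast; ring⟩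
  | zero => exact ⟨0, 0, by norm_num⟩
  | add x y hx hy ihx ihy =>
      obtain ⟨a, n, rfl⟩ := ihx
      obtain ⟨b, m, rfl⟩ := ihy
      refine ⟨a * p^m + b * p^n, n + m, ?_⟩
      rw [div_add_div _ _ (pow_ne_zero n hp0) (pow_ne_zero m hp0), pow_add]
      push_cast
      ring
  | neg x hx ihx =>
      obtain ⟨a, n, rfl⟩ := ihx
      exact ⟨-a, n, by push_cast; ring⟩

/-- reduced representation -/
lemma reduced_rep {p : ℕ} (hp : p.Prime) (a : ℤ) (n : ℕ) :
    ∃ (b : ℤ) (m : ℕ), (a:ℚ)/(p:ℚ)^n = (b:ℚ)/(p:ℚ)^m ∧ (m = 0 ∨ ¬ ((p:ℤ) ∣ b)) := by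
  have hp0 : (p:ℚ) ≠ 0 := by exact_mod_cast hp.ne_zero
  induction n generalizing a with
  | zero => exact ⟨a, 0, rfl, Or.inl rfl⟩
  | succ n ih =>
      by_cases h : (p:ℤ) ∣ a
      · obtain ⟨c, rfl⟩ := h
        obtain ⟨b, m, hbm, hred⟩ := ih c
        refine ⟨b, m, ?_, hred⟩
        rw [← hbm]
        push_cast
        field_simp
        ring
      · exact ⟨a, n+1, rfl, Or.inr h⟩

/-- the gcd step: if a₀/p^n₀ ∈ V and b/p^k ∈ V with p ∤ b and n₀ ≤ k, then a₀/p^k ∈ V. -/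
lemma key_step {p : ℕ} (hp : p.Prime) (V : AddSubgroup ℚ) (a₀ : ℤ) (n₀ : ℕ)
    (hv₀ : ((a₀:ℚ)/(p:ℚ)^n₀) ∈ V) (b : ℤ) (k : ℕ) (hb : ¬ ((p:ℤ) ∣ b)) (hk : n₀ ≤ k)
    (hbV : ((b:ℚ)/(p:ℚ)^k) ∈ V) : ((a₀:ℚ)/(p:ℚ)^k) ∈ V := by
  have hp0 : (p:ℚ) ≠ 0 := by exact_mod_cast hp.ne_zero
  set A : ℤ := a₀ * (p:ℤ)^(k - n₀) with hA
  set g : ℕ := A.gcd b with hg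
  -- g/p^k ∈ V
  have hbez : (g:ℤ) = A * A.gcdA b + b * A.gcdB b := Int.gcd_eq_gcd_ab A b
  have hgV : ((g:ℚ)/(p:ℚ)^k) ∈ V := by
    have heq : ((g:ℚ)/(p:ℚ)^k) =
        (A.gcdA b) • ((a₀:ℚ)/(p:ℚ)^n₀) + (A.gcdB b) • ((b:ℚ)/(p:ℚ)^k) := by
      have hpk : (p:ℚ)^k = (p:ℚ)^n₀ * (p:ℚ)^(k - n₀) := by
        rw [← pow_add]; congr 1; omega
      have : ((g:ℤ):ℚ) = (A:ℚ) * (A.gcdA b : ℚ) + (b:ℚ) * (A.gcdB b :ℚ) := by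
        exact_mod_cast congrArg (Int.cast : ℤ → ℚ) hbez
      rw [zsmul_eq_mul, zsmul_eq_mul, hpk]
      rw [show ((g:ℤ):ℚ) = (g:ℚ) from by push_cast; ring] at this
      rw [this, hA]
      push_cast
      field_simp
    rw [heq]
    exact AddSubgroup.add_mem _ (AddSubgroup.zsmul_mem _ hv₀ _) (AddSubgroup.zsmul_mem _ hbV _)
  -- g divides a₀
  have hpg : ¬ (p ∣ g) := by
    intro h
    exact hb ((Int.natCast_dvd_natCast.mpr h).trans (Int.gcd_dvd_right A b))
  have hcop : IsCoprime ((g:ℤ)) ((p:ℤ)^(k - n₀)) := by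
    refine IsCoprime.pow_right ?_
    rw [Int.isCoprime_iff_gcd_eq_one, Int.gcd_natCast_natCast]
    exact Nat.Coprime.gcd_eq_one (((Nat.Prime.coprime_iff_not_dvd hp).mpr hpg).symm)
  have hgd : ((g:ℤ)) ∣ a₀ := by
    have h1 : ((g:ℤ)) ∣ A := Int.gcd_dvd_left A b
    rw [hA] at h1
    exact hcop.dvd_of_dvd_mul_right h1
  obtain ⟨c, hc⟩ := hgd
  have : ((a₀:ℚ)/(p:ℚ)^k) = c • ((g:ℚ)/(p:ℚ)^k) := by
    rw [zsmul_eq_mul, hc]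
    push_cast
    ring
  rw [this]
  exact AddSubgroup.zsmul_mem _ hgV _

/-- every noncyclic subgroup of ℤ[1/p] has finite index in ℤ[1/p]. -/
theorem stmt14 (p : ℕ) (hp : p.Prime) (V : AddSubgroup ℚ) (hV : V ≤ zOneOver p)
    (hnc : ¬ ∃ a : ℚ, V = AddSubgroup.closure {a}) :
    (V.addSubgroupOf (zOneOver p)).index ≠ 0 := by
  have hp0 : (p:ℚ) ≠ 0 := by exact_mod_cast hp.ne_zero
  by_cases hdiv : ∃ a : ℤ, a ≠ 0 ∧ ∀ n : ℕ, ((a:ℚ)/(p:ℚ)^n) ∈ V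
  · -- finite index case
    obtain ⟨a, ha, haV⟩ := hdiv
    -- replace a by its p-coprime part b
    set m : ℕ := a.natAbs.factorization p with hm
    set b : ℕ := a.natAbs / p ^ m with hb
    have hana : a.natAbs ≠ 0 := Int.natAbs_ne_zero.mpr ha
    have hbpos : b ≠ 0 := (Nat.ordCompl_pos p hana).ne'
    have hcop : Nat.Coprime p b := Nat.coprime_ordCompl hp hana
    have hfact : p ^ m * b = a.natAbs := Nat.ordProj_mul_ordCompl_eq_self a.natAbs p
    have hbV : ∀ n : ℕ, ((b:ℚ)/(p:ℚ)^n) ∈ V := by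
      intro n
      have h1 : ((a.natAbs : ℚ)/(p:ℚ)^(n+m)) ∈ V := by
        rcases Int.natAbs_eq a with h | h
        · have h' := congrArg (Int.cast : ℤ → ℚ) h.symm
          rw [Int.cast_natCast] at h'
          rw [h']; exact haV _
        · have h' := congrArg (Int.cast : ℤ → ℚ) h.symm
          rw [Int.cast_neg, Int.cast_natCast] at h'
          rw [show ((a.natAbs:ℚ)) = -(a:ℚ) from by linarith [h'], neg_div]
          exact V.neg_mem (haV _)
      have h2 : ((b:ℚ)/(p:ℚ)^n) = ((a.natAbs : ℚ)/(p:ℚ)^(n+m)) := by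
        rw [← hfact]
        push_cast
        field_simp
        ring
      rwa [h2]
    -- now build finiteness of quotient
    haveI : NeZero b := ⟨hbpos⟩
    set K := zOneOver p
    set H := V.addSubgroupOf K with hH
    let Q := K ⧸ H
    let g₀ : Q := QuotientAddGroup.mk ⟨(1:ℚ), by simpa using one_div_pow_mem p 0⟩
    let ψ : ℤ →+ Q := zmultiplesHom Q g₀
    have hψb : ψ (b:ℤ) = 0 := by
      show ((b:ℤ)) • g₀ = 0
      have : ((b:ℤ)) • (⟨(1:ℚ), by simpa using one_div_pow_mem p 0⟩ : K) =
          ⟨(b:ℚ), by simpa using int_div_pow_mem p b 0⟩ := by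
        ext
        push_cast
        simp
      rw [show ((b:ℤ)) • g₀ = QuotientAddGroup.mk (((b:ℤ)) • (⟨(1:ℚ), by simpa using one_div_pow_mem p 0⟩ : K)) from rfl, this]
      rw [QuotientAddGroup.eq_zero_iff]
      rw [hH, AddSubgroup.mem_addSubgroupOf]
      have := hbV 0
      simpa using this
    have hsurj : Function.Surjective ψ := by
      intro q
      obtain ⟨x, rfl⟩ := QuotientAddGroup.mk_surjective q
      obtain ⟨x, hx⟩ := x
      -- induct on membership of x in the closure
      revert hx
      have : ∀ (hx : x ∈ zOneOver p), ∃ c : ℤ, ψ c = QuotientAddGroup.mk ⟨x, hx⟩ := by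
        intro hx
        induction hx using AddSubgroup.closure_induction with
        | mem x hxs =>
            obtain ⟨n, rfl⟩ := hxs
            -- 1/p^n = u*(b/p^n) + w*1 with u*b + w*p^n = 1
            have hc : IsCoprime ((b:ℤ)) ((p:ℤ)^n) := by
              refine IsCoprime.pow_right ?_
              rw [Int.isCoprime_iff_gcd_eq_one]
              simpa [Int.gcd_natCast_natCast] using hcop.symm
            obtain ⟨u, w, huw⟩ := hc
            refine ⟨w, ?_⟩
            have hxeq : (1:ℚ)/(p:ℚ)^n = u • ((b:ℚ)/(p:ℚ)^n) + w • (1:ℚ) := by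
              have h2 : ((u * b + w * (p:ℤ)^n : ℤ) : ℚ) = 1 := by exact_mod_cast congrArg (Int.cast : ℤ → ℚ) huw
              push_cast at h2
              rw [zsmul_eq_mul, zsmul_eq_mul, mul_one, ← h2, add_div, mul_div_assoc]
              congr 1
              rw [mul_div_assoc, div_self (pow_ne_zero n hp0), mul_one]
            have hmemb : ((b:ℚ)/(p:ℚ)^n) ∈ zOneOver p := int_div_pow_mem p b n
            have hmem1 : (1:ℚ) ∈ zOneOver p := by simpa using one_div_pow_mem p 0
            have hsplit : (⟨(1:ℚ)/(p:ℚ)^n, one_div_pow_mem p n⟩ : K) =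
                u • (⟨(b:ℚ)/(p:ℚ)^n, hmemb⟩ : K) + w • (⟨(1:ℚ), hmem1⟩ : K) := by
              ext
              push_cast
              simpa using hxeq
            show ψ w = QuotientAddGroup.mk ⟨(1:ℚ)/(p:ℚ)^n, _⟩
            rw [show (⟨(1:ℚ)/(p:ℚ)^n, by exact AddSubgroup.subset_closure ⟨n, rfl⟩⟩ : K) =
                u • (⟨(b:ℚ)/(p:ℚ)^n, hmemb⟩ : K) + w • (⟨(1:ℚ), hmem1⟩ : K) from hsplit]
            rw [QuotientAddGroup.mk_add]
            have hz : (QuotientAddGroup.mk (u • (⟨(b:ℚ)/(p:ℚ)^n, hmemb⟩ : K)) : Q) = 0 := by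
              rw [QuotientAddGroup.mk_zsmul]
              have : (QuotientAddGroup.mk (⟨(b:ℚ)/(p:ℚ)^n, hmemb⟩ : K) : Q) = 0 := by
                rw [QuotientAddGroup.eq_zero_iff, hH, AddSubgroup.mem_addSubgroupOf]
                exact hbV n
              rw [this, smul_zero]
            rw [hz, zero_add, QuotientAddGroup.mk_zsmul]
            rfl
        | zero => exact ⟨0, by simp [ψ]; rfl⟩
        | add x y hx hy ihx ihy =>
            obtain ⟨cx, hcx⟩ := ihx
            obtain ⟨cy, hcy⟩ := ihy
            refine ⟨cx + cy, ?_⟩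
            rw [map_add, hcx, hcy]
            rfl
        | neg x hx ihx =>
            obtain ⟨cx, hcx⟩ := ihx
            refine ⟨-cx, ?_⟩
            rw [map_neg, hcx]
            rfl
      exact fun hx => this hx
    -- ψ factors through ZMod b
    let φ : ZMod b →+ Q := ZMod.lift b ⟨ψ, hψb⟩
    have hφψ : ∀ c : ℤ, φ ((c : ZMod b)) = ψ c := fun c => ZMod.lift_coe _ _ c
    have hφsurj : Function.Surjective φ := by
      intro q
      obtain ⟨c, hc⟩ := hsurj q
      exact ⟨(c : ZMod b), by rw [hφψ]; exact hc⟩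
    haveI : Finite Q := Finite.of_surjective φ hφsurj
    exact AddSubgroup.index_ne_zero_of_finite
  · -- cyclic case: contradiction with hnc
    exfalso
    apply hnc
    push_neg at hdiv
    -- V = ⊥ case
    by_cases hbot : V = ⊥
    · exact ⟨0, by rw [hbot, AddSubgroup.closure_singleton_zero]⟩
    -- pick nonzero v₀ ∈ V
    have : ∃ v₀ ∈ V, v₀ ≠ 0 := by
      by_contra h
      push_neg at h
      exact hbot ((AddSubgroup.eq_bot_iff_forall V).mpr h)
    obtain ⟨v₀, hv₀V, hv₀0⟩ := this
    obtain ⟨a₀, n₀, hv₀⟩ := mem_zOneOver hp (hV hv₀V)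
    have ha₀ : a₀ ≠ 0 := by
      rintro rfl
      apply hv₀0
      rw [hv₀]; norm_num
    obtain ⟨n, hn⟩ := hdiv a₀ ha₀
    set N : ℕ := max n n₀ with hN
    -- bounded denominators: every v ∈ V is c / p^N
    have hbdd : ∀ v ∈ V, ∃ c : ℤ, v = (c:ℚ)/(p:ℚ)^N := by
      intro v hv
      obtain ⟨e, s, hes⟩ := mem_zOneOver hp (hV hv)
      obtain ⟨b, k, hbk, hred⟩ := reduced_rep hp e s
      rw [hbk] at hes
      by_cases hkN : k ≤ N
      · refine ⟨b * p^(N - k), ?_⟩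
        rw [hes]
        push_cast
        rw [show (p:ℚ)^N = (p:ℚ)^k * (p:ℚ)^(N-k) from by rw [← pow_add]; congr 1; omega]
        field_simp
      · exfalso
        push_neg at hkN
        have hkn₀ : n₀ ≤ k := le_trans (le_max_right n n₀) hkN.le
        have hpb : ¬ ((p:ℤ) ∣ b) := by
          rcases hred with h | h
          · omega
          · exact h
        have hbV' : ((b:ℚ)/(p:ℚ)^k) ∈ V := hes ▸ hv
        have hkey : ((a₀:ℚ)/(p:ℚ)^k) ∈ V :=
          key_step hp V a₀ n₀ (hv₀ ▸ hv₀V) b k hpb hkn₀ hbV'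
        apply hn
        have : ((a₀:ℚ)/(p:ℚ)^n) = ((p:ℤ)^(k-n)) • ((a₀:ℚ)/(p:ℚ)^k) := by
          rw [zsmul_eq_mul]
          push_cast
          rw [show (p:ℚ)^k = (p:ℚ)^n * (p:ℚ)^(k-n) from by rw [← pow_add]; congr 1; omega]
          field_simp
        rw [this]
        exact AddSubgroup.zsmul_mem _ hkey _
    -- V maps to a subgroup of ℤ under multiplication by p^N
    set f : ℚ →+ ℚ := AddMonoidHom.mulRight ((p:ℚ)^N) with hf
    set W : AddSubgroup ℤ := AddSubgroup.comap (Int.castAddHom ℚ) (V.map f) with hW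
    obtain ⟨g, hg⟩ := Int.subgroup_cyclic W
    refine ⟨(g:ℚ)/(p:ℚ)^N, le_antisymm ?_ ?_⟩
    · -- V ⊆ closure
      intro v hv
      obtain ⟨c, rfl⟩ := hbdd v hv
      have hcW : c ∈ W := by
        rw [hW, AddSubgroup.mem_comap]
        refine ⟨(c:ℚ)/(p:ℚ)^N, hv, ?_⟩
        simp [hf, AddMonoidHom.mulRight_apply, Int.castAddHom]
        field_simp
      rw [hg] at hcW
      obtain ⟨z, hz⟩ := AddSubgroup.mem_closure_singleton.mp hcW
      apply AddSubgroup.mem_closure_singleton.mpr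
      refine ⟨z, ?_⟩
      rw [zsmul_eq_mul, ← hz, smul_eq_mul]
      push_cast
      ring
    · -- closure ⊆ V
      rw [AddSubgroup.closure_le]
      intro x hx
      simp only [Set.mem_singleton_iff] at hx
      subst hx
      have hgW : g ∈ W := by
        rw [hg]
        exact AddSubgroup.subset_closure rfl
      rw [hW, AddSubgroup.mem_comap] at hgW
      obtain ⟨v, hvV, hvg⟩ := hgW
      have : v = (g:ℚ)/(p:ℚ)^N := by
        simp [hf, AddMonoidHom.mulRight_apply, Int.castAddHom] at hvg
        field_simp
        linarith [hvg]
      exact this ▸ hvV
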